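/- Topological Baumslag Lemma: let X be a Hausdorff topological space, let T be a type equipped with a decreasing sequence of subsets T₀ ⊇ T₁ ⊇ T₂ ⊇ ⋯, let k ≥ 1, let g₁, …, g_k be self-homeomorphisms of X, and for each i = 1, …, k let φᵢ : T → Homeo(X) be a map attracting to a nonempty proper compact subset Cᵢ ⊆ X. Assume Cᵢ ∩ gᵢ₊₁(Cᵢ₊₁) = ∅ for i = 1, …, k with indices taken modulo k (so in particular C_k ∩ g₁(C₁) = ∅), and assume X ≠ g₁(C₁) ∪ C_k. Then the map ψ : T → Homeo(X) defined by ψ(t) = g₁·φ₁(t)·g₂·φ₂(t)·⋯·g_k·φ_k(t) is doubly attracting to the pair (g₁(C₁), C_k). -/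

import Mathlib

/-- The group of self-homeomorphisms of a topological space, with
`(f * g) x = f (g x)`. -/
instance homeoGroup {X : Type*} [TopologicalSpace X] : Group (X ≃ₜ X) where
  mul f g := g.trans f
  one := Homeomorph.refl X
  inv := Homeomorph.symm
  mul_assoc _ _ _ := Homeomorph.ext fun _ => rfl
  one_mul _ := Homeomorph.ext fun _ => rfl
  mul_one _ := Homeomorph.ext fun _ => rfl
  inv_mul_cancel a := Homeomorph.ext fun x => a.symm_apply_apply x

/-- Given a decreasing family `Ts` of subsets of the parameter set `T`, a map
`φ : T → Homeo(X)` is *attracting* to a nonempty proper compact set `C ⊆ X` if for each open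
neighborhood `U ⊇ C` there is `M` such that `φ(t)^{±1}(X ∖ U) ⊆ U` for all `t ∈ Ts M`. -/
def Attracting {X T : Type*} [TopologicalSpace X] (Ts : ℕ → Set T)
    (φ : T → X ≃ₜ X) (C : Set X) : Prop :=
  C.Nonempty ∧ C ≠ Set.univ ∧ IsCompact C ∧
    ∀ U : Set X, IsOpen U → C ⊆ U → ∃ M : ℕ, ∀ t ∈ Ts M,
      (∀ x : X, x ∉ U → φ t x ∈ U) ∧ (∀ x : X, x ∉ U → (φ t).symm x ∈ U)

/-- Given a decreasing family `Ts` of subsets of the parameter set `T`, a map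
`ψ : T → Homeo(X)` is *doubly attracting* to a disjoint pair `(C⁺, C⁻)` of nonempty compact
sets with `C⁺ ∪ C⁻ ≠ X` if for each disjoint pair of open neighborhoods `(U⁺, U⁻)` of
`(C⁺, C⁻)` there is `M` such that for all `t ∈ Ts M` one has `ψ(t)(X ∖ U⁻) ⊆ U⁺` and
`ψ(t)⁻¹(X ∖ U⁺) ⊆ U⁻`. -/
def DoublyAttracting {X T : Type*} [TopologicalSpace X] (Ts : ℕ → Set T)
    (ψ : T → X ≃ₜ X) (Cp Cm : Set X) : Prop :=
  Cp.Nonempty ∧ Cm.Nonempty ∧ IsCompact Cp ∧ IsCompact Cm ∧ Disjoint Cp Cm ∧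
    Cp ∪ Cm ≠ Set.univ ∧
    ∀ Up Um : Set X, IsOpen Up → IsOpen Um → Disjoint Up Um → Cp ⊆ Up → Cm ⊆ Um →
      ∃ M : ℕ, ∀ t ∈ Ts M,
        (∀ x : X, x ∉ Um → ψ t x ∈ Up) ∧ (∀ x : X, x ∉ Up → (ψ t).symm x ∈ Um)

/-- **Topological Baumslag Lemma.** Let `X` be Hausdorff, let each `φᵢ : T → Homeo(X)` be
attracting to a nonempty proper compact set `Cᵢ`, assume `Cᵢ ∩ gᵢ₊₁(Cᵢ₊₁) = ∅` (indices
mod `k`) and `X ≠ g₁(C₁) ∪ C_k`.  Then `ψ(t) = g₁ φ₁(t) g₂ φ₂(t) ⋯ g_k φ_k(t)` is doubly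
attracting to `(g₁(C₁), C_k)`. -/
theorem topological_baumslag {X T : Type*} [TopologicalSpace X] [T2Space X]
    (Ts : ℕ → Set T) (hTs : Antitone Ts)
    (k : ℕ) [NeZero k] (hk : 1 ≤ k) (g : Fin k → X ≃ₜ X) (φ : Fin k → T → X ≃ₜ X)
    (C : Fin k → Set X)
    (hattr : ∀ i : Fin k, Attracting Ts (φ i) (C i))
    (hdisj : ∀ i : Fin k, C i ∩ (⇑(g (i + 1)) '' C (i + 1)) = ∅)
    (hne : (⇑(g 0) '' C 0) ∪ C ⟨k - 1, by omega⟩ ≠ Set.univ) :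
    DoublyAttracting Ts (fun t => (List.ofFn fun i : Fin k => g i * φ i t).prod)
      (⇑(g 0) '' C 0) (C ⟨k - 1, by omega⟩) := by
  classical
  have hCne : ∀ i, (C i).Nonempty := fun i => (hattr i).1
  have hCcpt : ∀ i, IsCompact (C i) := fun i => (hattr i).2.2.1
  have hφU := fun i => (hattr i).2.2.2
  -- basic Fin arithmetic
  have hkm : k - 1 < k := by omega
  have hsucc : ∀ (j : ℕ) (h1 : j < k) (h2 : j + 1 < k),
      (⟨j, h1⟩ : Fin k) + 1 = ⟨j + 1, h2⟩ := by
    intro j h1 h2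
    apply Fin.ext
    simp only [Fin.add_def, Fin.val_one']
    rw [Nat.mod_eq_of_lt (by omega : 1 < k), Nat.mod_eq_of_lt h2]
  have hzero : ∀ h : (0 : ℕ) < k, (⟨0, h⟩ : Fin k) = 0 := by
    intro h; apply Fin.ext; simp
  have hwrap : (⟨k - 1, hkm⟩ : Fin k) + 1 = 0 := by
    apply Fin.ext
    simp only [Fin.add_def, Fin.val_one', Fin.val_zero]
    rcases Nat.lt_or_ge k 2 with h2 | h2
    · have : k = 1 := by omega
      subst this; rfl
    · rw [Nat.mod_eq_of_lt (by omega : 1 < k), (by omega : k - 1 + 1 = k), Nat.mod_self]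
  have hdisj' : ∀ i : Fin k, Disjoint (C i) (⇑(g (i + 1)) '' C (i + 1)) :=
    fun i => Set.disjoint_iff_inter_eq_empty.mpr (hdisj i)
  have hCpCm : Disjoint (⇑(g 0) '' C 0) (C ⟨k - 1, hkm⟩) := by
    have := hdisj' ⟨k - 1, hkm⟩
    rw [hwrap] at this
    exact this.symm
  refine ⟨(hCne 0).image _, hCne _, (hCcpt 0).image (g 0).continuous, hCcpt _, hCpCm, hne, ?_⟩
  intro Up Um hUpo hUmo hUpUm hUp hUm
  -- separation of C i from g (i+1) '' C (i+1)
  have hsep : ∀ i : Fin k, ∃ A B : Set X, IsOpen A ∧ IsOpen B ∧ C i ⊆ A ∧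
      ⇑(g (i + 1)) '' C (i + 1) ⊆ B ∧ Disjoint A B := fun i =>
    SeparatedNhds.of_isCompact_isCompact (hCcpt i)
      ((hCcpt (i + 1)).image (g (i + 1)).continuous) (hdisj' i)
  choose A B hAo hBo hCA hCB hAB using hsep
  -- extra shrinking sets
  set E : Fin k → Set X := fun i =>
    (if i = (⟨k - 1, hkm⟩ : Fin k) then Um else Set.univ) ∩
    (if i = 0 then ⇑(g 0) ⁻¹' Up else Set.univ) with hE
  have hEo : ∀ i, IsOpen (E i) := by
    intro i
    apply IsOpen.inter <;> split_ifs <;>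
      first
        | exact isOpen_univ
        | exact hUmo
        | exact hUpo.preimage (g 0).continuous
  have hCE : ∀ i, C i ⊆ E i := by
    intro i x hx
    constructor
    · split_ifs with h
      · subst h; exact hUm hx
      · trivial
    · split_ifs with h
      · subst h; exact hUp ⟨x, hx, rfl⟩
      · trivial
  -- the shrunken neighborhoods V i
  set V : Fin k → Set X := fun i => (A i ∩ ⇑(g i) ⁻¹' B (i - 1)) ∩ E i with hV
  have hVo : ∀ i, IsOpen (V i) :=
    fun i => (((hAo i).inter ((hBo (i - 1)).preimage (g i).continuous)).inter (hEo i))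
  have hCV : ∀ i, C i ⊆ V i := by
    intro i x hx
    refine ⟨⟨hCA i hx, ?_⟩, hCE i hx⟩
    have h1 := hCB (i - 1)
    rw [sub_add_cancel] at h1
    exact h1 ⟨x, hx, rfl⟩
  have hVdisj : ∀ i : Fin k, Disjoint (V i) (⇑(g (i + 1)) '' V (i + 1)) := by
    intro i
    refine (hAB i).mono (fun x hx => hx.1.1) ?_
    rintro _ ⟨x, hx, rfl⟩
    have h2 := hx.1.2
    rw [add_sub_cancel_right] at h2
    exact h2
  have hVUm : V ⟨k - 1, hkm⟩ ⊆ Um := by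
    intro x hx
    have := hx.2.1
    rwa [if_pos rfl] at this
  have hVUp : ⇑(g 0) '' V 0 ⊆ Up := by
    rintro _ ⟨x, hx, rfl⟩
    have := hx.2.2
    rwa [if_pos rfl] at this
  -- pick uniform parameter level
  choose M hM using fun i => hφU i (V i) (hVo i) (hCV i)
  refine ⟨Finset.univ.sup M, fun t ht => ?_⟩
  have hMt : ∀ i, t ∈ Ts (M i) :=
    fun i => hTs (Finset.le_sup (Finset.mem_univ i)) ht
  have hfwd : ∀ i, ∀ x ∉ V i, φ i t x ∈ V i := fun i => (hM i t (hMt i)).1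
  have hbwd : ∀ i, ∀ x ∉ V i, (φ i t).symm x ∈ V i := fun i => (hM i t (hMt i)).2
  set f : Fin k → X ≃ₜ X := fun i => g i * φ i t with hf
  have hlen : (List.ofFn f).length = k := List.length_ofFn (f := f)
  have hmul : ∀ (a b : X ≃ₜ X) (x : X), (a * b) x = a (b x) := fun _ _ _ => rfl
  have hone : ∀ x : X, (1 : X ≃ₜ X) x = x := fun _ => rfl
  have hsymm : ∀ (a : X ≃ₜ X) (x : X), (a⁻¹ : X ≃ₜ X) x = a.symm x := fun _ _ => rfl
  have hfapp : ∀ (i : Fin k) (x : X), f i x = g i (φ i t x) := fun i x => rfl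
  have hfinv : ∀ (i : Fin k) (x : X), ((f i)⁻¹ : X ≃ₜ X) x = (φ i t).symm ((g i).symm x) := by
    intro i x
    rw [hf]
    simp only [mul_inv_rev]
    rw [hmul, hsymm, hsymm]
  have hdropP : ∀ (j : ℕ) (hj : j < k), ((List.ofFn f).drop j).prod
      = f ⟨j, hj⟩ * ((List.ofFn f).drop (j + 1)).prod := by
    intro j hj
    rw [List.drop_eq_getElem_cons (by rw [hlen]; exact hj), List.prod_cons]
    congr 1
    exact List.getElem_ofFn (f := f) (i := j) (by rw [hlen]; exact hj)
  have htakeP : ∀ (j : ℕ) (hj : j < k), ((List.ofFn f).take (j + 1)).prod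
      = ((List.ofFn f).take j).prod * f ⟨j, hj⟩ := by
    intro j hj
    rw [List.prod_take_succ _ j (by rw [hlen]; exact hj)]
    congr 1
    exact List.getElem_ofFn (f := f) (i := j) (by rw [hlen]; exact hj)
  constructor
  · -- forward direction
    intro x hx
    have key : ∀ (d j : ℕ) (hdj : j + d + 1 = k),
        ((List.ofFn f).drop j).prod x ∈ ⇑(g ⟨j, by omega⟩) '' V ⟨j, by omega⟩ := by
      intro d
      induction d with
      | zero =>
        intro j hdj
        have hjlt : j < k := by omega
        have hdrop : (List.ofFn f).drop (j + 1) = [] :=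
          List.drop_eq_nil_of_le (by rw [hlen]; omega)
        rw [hdropP j hjlt, hdrop]
        rw [hmul, List.prod_nil, hone, hfapp]
        have hjkm : (⟨j, hjlt⟩ : Fin k) = ⟨k - 1, hkm⟩ := by
          simp only [Fin.mk.injEq]; omega
        have hxV : x ∉ V ⟨j, hjlt⟩ := by
          rw [hjkm]; exact fun h => hx (hVUm h)
        exact ⟨_, hfwd _ x hxV, rfl⟩
      | succ d ih =>
        intro j hdj
        have hjlt : j < k := by omega
        have hj1lt : j + 1 < k := by omega
        have hIH := ih (j + 1) (by omega)
        rw [hdropP j hjlt, hmul, hfapp]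
        set y := ((List.ofFn f).drop (j + 1)).prod x with hy
        have hyV : y ∉ V ⟨j, hjlt⟩ := by
          intro hmem
          have hd := hVdisj ⟨j, hjlt⟩
          rw [hsucc j hjlt hj1lt] at hd
          exact (hd.le_bot ⟨hmem, hIH⟩)
        exact ⟨_, hfwd _ y hyV, rfl⟩
    have hfin := key (k - 1) 0 (by omega)
    rw [List.drop_zero] at hfin
    rw [hzero (by omega)] at hfin
    obtain ⟨z, hz, hzeq⟩ := hfin
    exact hVUp ⟨z, hz, by rw [← hzeq]⟩
  · -- backward direction
    intro x hx
    have key : ∀ (j : ℕ) (hj : j < k),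
        (((List.ofFn f).take (j + 1)).prod)⁻¹ x ∈ V ⟨j, hj⟩ := by
      intro j
      induction j with
      | zero =>
        intro hj
        rw [htakeP 0 hj, List.take_zero, List.prod_nil, one_mul, hfinv]
        rw [hzero hj]
        have hg0x : (g 0).symm x ∉ V 0 := by
          intro hmem
          exact hx (hVUp ⟨(g 0).symm x, hmem, (g 0).apply_symm_apply x⟩)
        exact hbwd 0 _ hg0x
      | succ j ih =>
        intro hj
        have hjlt : j < k := by omega
        have hIH := ih hjlt
        rw [htakeP (j + 1) hj, mul_inv_rev, hmul, hfinv]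
        set y := (((List.ofFn f).take (j + 1)).prod)⁻¹ x with hy
        have hgy : (g ⟨j + 1, hj⟩).symm y ∉ V ⟨j + 1, hj⟩ := by
          intro hmem
          have hd := hVdisj ⟨j, hjlt⟩
          rw [hsucc j hjlt hj] at hd
          exact hd.le_bot ⟨hIH, ⟨(g ⟨j + 1, hj⟩).symm y, hmem,
            (g ⟨j + 1, hj⟩).apply_symm_apply y⟩⟩
        exact hbwd _ _ hgy
    have hfin := key (k - 1) hkm
    have htk : (List.ofFn f).take (k - 1 + 1) = List.ofFn f := by
      apply List.take_of_length_le
      rw [hlen]; omega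
    rw [htk] at hfin
    exact hVUm hfin
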